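/- (Dominance for ε-approximately k-smooth graph functions.) If f is ε-approximately k-smooth and nonzero at every vertex, then for all vertices i, j with w_ij = 1, the modified Laplacian-walk proposal satisfies Q'_{ij} ≥ (1/M) p_f(j), where M = k + 2k√n ε + n ε². -/
import Mathlib


/-- The local cumulative coherence of order `k` at node `i`: the Euclidean norm
`‖U_kᵀ δ_i‖₂`, where `δ_i` is the `i`-th standard basis vector of `ℝ^n`. -/
noncomputable def localCoherence {n k : ℕ} (Uk : Matrix (Fin n) (Fin k) ℝ)
    (i : Fin n) : ℝ :=
  Real.sqrt (∑ l, (Uk.transpose.mulVec (Pi.single i 1) l) ^ 2)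

/-- Dominance for `ε`-approximately `k`-smooth graph functions: if `f`
is `ε`-approximately `k`-smooth and nonzero at every vertex, then for all vertices
`i, j` with `w i j = 1`, the modified Laplacian-walk proposal
`Q'_{ij} = w_ij (‖U_kᵀ δ_j‖₂ + ε)² / Σ_{l : w_il = 1} (‖U_kᵀ δ_l‖₂ + ε)²`
satisfies `Q'_{ij} ≥ (1/M) p_f(j)`, where `M = k + 2k√n ε + n ε²`.  (Since `W` is a 0/1
matrix, the sum over `{l : w_il = 1}` is encoded via multiplication by `W i l`.) -/
theorem laplacian_walk_dominance_approx_ksmooth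
    {n : ℕ} (hn : 2 ≤ n)
    (W : Matrix (Fin n) (Fin n) ℝ)
    (hWsymm : ∀ i j, W i j = W j i)
    (hW01 : ∀ i j, W i j = 0 ∨ W i j = 1)
    (hWdiag : ∀ i, W i i = 0)
    (hWconn : ∀ i j : Fin n, ∃ m : ℕ, ∃ v : Fin (m + 1) → Fin n,
      v 0 = i ∧ v (Fin.last m) = j ∧ ∀ l : Fin m, W (v l.castSucc) (v l.succ) = 1)
    (hdegpos : ∀ i, 0 < ∑ j, W i j)
    {k : ℕ} (hk1 : 1 ≤ k) (hkn : k ≤ n)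
    (Uk : Matrix (Fin n) (Fin k) ℝ)
    (hU : Uk.transpose * Uk = 1)
    (f : Fin n → ℝ) (ε : ℝ) (hε : 0 < ε)
    (fks : Fin n → ℝ) (hfks : fks = Uk.mulVec (Uk.transpose.mulVec f))
    (happrox : ∀ i, |f i - fks i| ≤ ε * Real.sqrt (∑ j, fks j ^ 2))
    (hfne : ∀ i, f i ≠ 0)
    (pf : Fin n → ℝ) (hpf : ∀ i, pf i = f i ^ 2 / ∑ j, f j ^ 2)
    (Q' : Matrix (Fin n) (Fin n) ℝ)
    (hQ' : ∀ i j, Q' i j =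
      W i j * (localCoherence Uk j + ε) ^ 2 / ∑ l, W i l * (localCoherence Uk l + ε) ^ 2)
    (i j : Fin n) (hij : W i j = 1) :
    (1 / ((k : ℝ) + 2 * k * Real.sqrt n * ε + n * ε ^ 2)) * pf j ≤ Q' i j := by
  set c : Fin n → ℝ := localCoherence Uk with hc
  have hcdef : ∀ l, c l = Real.sqrt (∑ m, Uk l m ^ 2) := by
    intro l
    simp only [hc, localCoherence]
    congr 1
    refine Finset.sum_congr rfl fun m _ => ?_
    simp [Matrix.mulVec, Matrix.transpose, dotProduct, Pi.single_apply,
      Finset.sum_ite_eq']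
  have hcnn : ∀ l, 0 ≤ c l := fun l => by rw [hcdef]; exact Real.sqrt_nonneg _
  have hcsq : ∀ l, c l ^ 2 = ∑ m, Uk l m ^ 2 := by
    intro l
    rw [hcdef]
    exact Real.sq_sqrt (Finset.sum_nonneg fun m _ => sq_nonneg _)
  -- sum of squared coherences = k
  have hsumcsq : ∑ l, c l ^ 2 = (k : ℝ) := by
    simp_rw [hcsq]
    rw [Finset.sum_comm]
    have : ∀ m : Fin k, ∑ l, Uk l m ^ 2 = 1 := by
      intro m
      have := congrFun (congrFun hU m) m
      simp [Matrix.mul_apply, Matrix.transpose, Matrix.one_apply, pow_two] at this ⊢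
      simpa [pow_two] using this
    simp [this]
  -- g = Uᵀ f, S = ‖g‖²
  set g : Fin k → ℝ := Uk.transpose.mulVec f with hg
  set S : ℝ := ∑ m, g m ^ 2 with hS
  have hSnn : 0 ≤ S := Finset.sum_nonneg fun m _ => sq_nonneg _
  have hfks_eq : ∀ l, fks l = ∑ m, Uk l m * g m := by
    intro l; rw [hfks]; rfl
  -- ∑ fks² = S
  have hfks_sum : ∑ l, fks l ^ 2 = S := by
    have h1 : ∑ l, fks l ^ 2 = dotProduct fks fks := by
      simp [dotProduct, pow_two]
    have h2 : dotProduct fks fks = dotProduct g g := by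
      rw [hfks]
      rw [Matrix.dotProduct_mulVec, ← Matrix.mulVec_transpose, Matrix.mulVec_mulVec, hU,
        Matrix.one_mulVec]
    rw [h1, h2, hS]
    simp [dotProduct, pow_two]
  -- S ≤ ∑ f²
  have horth : dotProduct fks (f - fks) = 0 := by
    rw [hfks]
    rw [dotProduct_comm, Matrix.dotProduct_mulVec, ← Matrix.mulVec_transpose]
    have h0 : Uk.transpose.mulVec (f - Uk.mulVec (Uk.transpose.mulVec f)) = 0 := by
      rw [Matrix.mulVec_sub, Matrix.mulVec_mulVec, hU, Matrix.one_mulVec, sub_self]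
    rw [h0, zero_dotProduct]
  have hSle : S ≤ ∑ l, f l ^ 2 := by
    have hexp : ∑ l, f l ^ 2 = ∑ l, fks l ^ 2 + 2 * (dotProduct fks (f - fks)) + ∑ l, (f l - fks l) ^ 2 := by
      simp only [dotProduct, Pi.sub_apply, Finset.mul_sum, ← Finset.sum_add_distrib]
      refine Finset.sum_congr rfl fun l _ => by ring
    rw [hexp, horth, hfks_sum]
    have : 0 ≤ ∑ l, (f l - fks l) ^ 2 := Finset.sum_nonneg fun l _ => sq_nonneg _
    linarith
  -- S > 0
  have hSpos : 0 < S := by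
    rcases hSnn.lt_or_eq with h | h
    · exact h
    · exfalso
      have hz : ∑ l, fks l ^ 2 = 0 := by rw [hfks_sum, ← h]
      have hfksz : fks i = 0 := by
        have := (Finset.sum_eq_zero_iff_of_nonneg (fun l _ => sq_nonneg (fks l))).mp hz i
          (Finset.mem_univ i)
        exact pow_eq_zero_iff (two_ne_zero) |>.mp this
      have := happrox i
      rw [hfksz, sub_zero, hz, Real.sqrt_zero, mul_zero] at this
      exact hfne i (abs_nonpos_iff.mp this)
  have hsqrtS : Real.sqrt S ^ 2 = S := Real.sq_sqrt hSnn
  -- |fks l| ≤ c l * √S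
  have hfks_bound : ∀ l, |fks l| ≤ c l * Real.sqrt S := by
    intro l
    have hcs : fks l ^ 2 ≤ c l ^ 2 * S := by
      rw [hfks_eq, hcsq, hS]
      exact Finset.sum_mul_sq_le_sq_mul_sq Finset.univ _ _
    calc |fks l| = Real.sqrt (fks l ^ 2) := (Real.sqrt_sq_eq_abs _).symm
      _ ≤ Real.sqrt (c l ^ 2 * S) := Real.sqrt_le_sqrt hcs
      _ = c l * Real.sqrt S := by
          rw [Real.sqrt_mul (sq_nonneg _), Real.sqrt_sq (hcnn l)]
  -- f j² ≤ (c j + ε)² S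
  have hf_bound : ∀ l, f l ^ 2 ≤ (c l + ε) ^ 2 * S := by
    intro l
    have h1 : |f l| ≤ (c l + ε) * Real.sqrt S := by
      have := happrox l
      rw [hfks_sum] at this
      calc |f l| ≤ |fks l| + |f l - fks l| := by
            have := abs_sub_abs_le_abs_sub (f l) (fks l); rw [abs_sub_comm] at this ⊢; nlinarith [abs_add_le (fks l) (f l - fks l)]
        _ ≤ c l * Real.sqrt S + ε * Real.sqrt S := add_le_add (hfks_bound l) this
        _ = (c l + ε) * Real.sqrt S := by ring
    calc f l ^ 2 = |f l| ^ 2 := (sq_abs _).symm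
      _ ≤ ((c l + ε) * Real.sqrt S) ^ 2 := by
          apply pow_le_pow_left₀ (abs_nonneg _) h1
      _ = (c l + ε) ^ 2 * S := by rw [mul_pow, hsqrtS]
  -- pf j ≤ (c j + ε)²
  have hfsumpos : 0 < ∑ l, f l ^ 2 := lt_of_lt_of_le hSpos hSle
  have hpf_bound : pf j ≤ (c j + ε) ^ 2 := by
    rw [hpf]
    rw [div_le_iff₀ hfsumpos]
    calc f j ^ 2 ≤ (c j + ε) ^ 2 * S := hf_bound j
      _ ≤ (c j + ε) ^ 2 * ∑ l, f l ^ 2 := by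
          apply mul_le_mul_of_nonneg_left hSle (sq_nonneg _)
  have hpf_nn : 0 ≤ pf j := by rw [hpf]; positivity
  -- denominator
  set D : ℝ := ∑ l, W i l * (c l + ε) ^ 2 with hD
  have hterm_nn : ∀ l, 0 ≤ W i l * (c l + ε) ^ 2 := by
    intro l
    rcases hW01 i l with h | h <;> rw [h] <;> [simp; simp [sq_nonneg]]
  have hcε_pos : ∀ l, 0 < (c l + ε) ^ 2 := fun l => pow_pos (by have := hcnn l; linarith) 2
  have hDpos : 0 < D := by
    have hle : W i j * (c j + ε) ^ 2 ≤ D :=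
      Finset.single_le_sum (fun l _ => hterm_nn l) (Finset.mem_univ j)
    rw [hij, one_mul] at hle
    exact lt_of_lt_of_le (hcε_pos j) hle
  -- M
  set M : ℝ := (k : ℝ) + 2 * k * Real.sqrt n * ε + n * ε ^ 2 with hM
  have hsumc : ∑ l, c l ≤ Real.sqrt n * k := by
    have hcs : (∑ l, c l) ^ 2 ≤ (n : ℝ) * k := by
      have := Finset.sum_mul_sq_le_sq_mul_sq Finset.univ (fun _ : Fin n => (1:ℝ)) c
      simpa [hsumcsq] using this
    have h1 : ∑ l, c l ≤ Real.sqrt ((n:ℝ) * k) := by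
      have := Real.sqrt_le_sqrt hcs
      rwa [Real.sqrt_sq (Finset.sum_nonneg fun l _ => hcnn l)] at this
    refine h1.trans ?_
    rw [Real.sqrt_mul (Nat.cast_nonneg n)]
    apply mul_le_mul_of_nonneg_left _ (Real.sqrt_nonneg _)
    calc Real.sqrt (k:ℝ) ≤ Real.sqrt ((k:ℝ)^2) := by
          apply Real.sqrt_le_sqrt
          have : (1:ℝ) ≤ k := by exact_mod_cast hk1
          nlinarith
      _ = (k:ℝ) := Real.sqrt_sq (Nat.cast_nonneg k)
  have hDle : D ≤ M := by
    have h1 : D ≤ ∑ l, (c l + ε) ^ 2 := by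
      apply Finset.sum_le_sum
      intro l _
      rcases hW01 i l with h | h <;> rw [h] <;> simp [sq_nonneg, le_of_lt (hcε_pos l)]
    have h2 : ∑ l, (c l + ε) ^ 2 = (∑ l, c l ^ 2) + 2 * ε * (∑ l, c l) + n * ε ^ 2 := by
      have : ∀ l, (c l + ε) ^ 2 = c l ^ 2 + 2 * ε * c l + ε ^ 2 := fun l => by ring
      simp_rw [this, Finset.sum_add_distrib, ← Finset.mul_sum, Finset.sum_const,
        Finset.card_univ, Fintype.card_fin, nsmul_eq_mul]
    have h3 : 2 * ε * (∑ l, c l) ≤ 2 * k * Real.sqrt n * ε := by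
      have := mul_le_mul_of_nonneg_left hsumc (by linarith : (0:ℝ) ≤ 2 * ε)
      calc 2 * ε * (∑ l, c l) ≤ 2 * ε * (Real.sqrt n * k) := this
        _ = 2 * k * Real.sqrt n * ε := by ring
    rw [hM]
    calc D ≤ ∑ l, (c l + ε) ^ 2 := h1
      _ = (∑ l, c l ^ 2) + 2 * ε * (∑ l, c l) + n * ε ^ 2 := h2
      _ ≤ (k : ℝ) + 2 * k * Real.sqrt n * ε + n * ε ^ 2 := by rw [hsumcsq]; linarith
  have hMpos : 0 < M := lt_of_lt_of_le hDpos hDle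
  -- conclude
  rw [hQ', hij, one_mul, ← hD]
  rw [one_div, inv_mul_eq_div, div_le_div_iff₀ hMpos hDpos]
  calc pf j * D ≤ (c j + ε) ^ 2 * D := mul_le_mul_of_nonneg_right hpf_bound (le_of_lt hDpos)
    _ ≤ (c j + ε) ^ 2 * M := mul_le_mul_of_nonneg_left hDle (sq_nonneg _)
    _ = (c j + ε) ^ 2 * M := rfl
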